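/- For every ordinal α there exist a well-founded partial order T, a family of well-founded partial orders (P_t)_{t∈T}, and an element a of the ranked sum P with rank_P(a) = rank_T(f(a)) + rank_{P_{f(a)}}(a) + α. Concretely, take T = α + 1 and P_t = β + 1 for all t, where β is the least ordinal with α + β = β; the maximum a of P_α satisfies rank_P(a) = β + α while rank_T(f(a)) + rank_{P_{f(a)}}(a) = α + β = β. -/

import Mathlib

open Ordinal

section RankedSum

variable {T : Type*} [PartialOrder T] {P : T → Type*} [∀ t, PartialOrder (P t)]
  [∀ t, WellFoundedLT (P t)]

/-- The primitive rank of an element of the disjoint union: its ordinal rank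
inside its own component. -/
noncomputable def primRank (a : Σ t, P t) : Ordinal :=
  IsWellFounded.rank (α := P a.1) (· < ·) a.2

/-- The ranked sum (strict) order on the disjoint union of the family `P`. -/
def RankedLT (a b : Σ t, P t) : Prop :=
  (∃ h : a.1 = b.1, (h ▸ a.2) < b.2) ∨ (a.1 < b.1 ∧ primRank a ≤ primRank b)

/-- The reflexive closure of the ranked sum order. -/
def RankedLE (a b : Σ t, P t) : Prop :=
  RankedLT a b ∨ a = b

variable [WellFoundedLT T]

theorem rankedLT_wf : WellFounded (RankedLT (T := T) (P := P)) := by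
  have hsub : Subrelation (RankedLT (T := T) (P := P))
      (InvImage (Prod.Lex (· < ·) (· < ·))
        (fun a => (IsWellFounded.rank (α := T) (· < ·) a.1, primRank a))) := by
    rintro ⟨s, x⟩ ⟨t, y⟩ (⟨h, hlt⟩ | ⟨h, _⟩)
    · dsimp at h
      subst h
      exact Prod.Lex.right _ (IsWellFounded.rank_lt_of_rel hlt)
    · exact Prod.Lex.left _ _ (IsWellFounded.rank_lt_of_rel h)
  exact Subrelation.wf hsub
    (InvImage.wf _ (WellFounded.prod_lex wellFounded_lt wellFounded_lt))

instance : IsWellFounded (Σ t, P t) RankedLT := ⟨rankedLT_wf⟩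

/-- The rank of an element of the ranked sum. -/
noncomputable def rankedRank (a : Σ t, P t) : Ordinal :=
  IsWellFounded.rank (RankedLT (T := T) (P := P)) a

end RankedSum


universe u
namespace Ordinal

noncomputable def nadd (a b : Ordinal.{u}) : Ordinal.{u} :=
  max (⨆ x : Set.Iio a, Order.succ (nadd x.1 b)) (⨆ x : Set.Iio b, Order.succ (nadd a x.1))
termination_by (a, b)
decreasing_by
  · exact Prod.Lex.left _ _ x.2
  · exact Prod.Lex.right _ x.2

infixl:65 " ♯ " => nadd

theorem nadd_def (a b : Ordinal.{u}) : a ♯ b =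
    max (⨆ x : Set.Iio a, Order.succ (x.1 ♯ b)) (⨆ x : Set.Iio b, Order.succ (a ♯ x.1)) := by
  rw [nadd]

theorem nadd_lt_nadd_right {a b : Ordinal.{u}} (h : a < b) (c : Ordinal.{u}) :
    a ♯ c < b ♯ c := by
  rw [nadd_def b c]
  exact (Order.lt_succ _).trans_le ((Ordinal.le_iSup (fun x : Set.Iio b => Order.succ (x.1 ♯ c))
    ⟨a, h⟩).trans (le_max_left _ _))

theorem nadd_lt_nadd_left {b c : Ordinal.{u}} (h : b < c) (a : Ordinal.{u}) :
    a ♯ b < a ♯ c := by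
  rw [nadd_def a c]
  exact (Order.lt_succ _).trans_le ((Ordinal.le_iSup (fun x : Set.Iio c => Order.succ (a ♯ x.1))
    ⟨b, h⟩).trans (le_max_right _ _))

theorem nadd_le_iff {a b c : Ordinal.{u}} :
    a ♯ b ≤ c ↔ (∀ a' < a, a' ♯ b < c) ∧ ∀ b' < b, a ♯ b' < c := by
  refine ⟨fun h => ⟨fun a' ha' => (nadd_lt_nadd_right ha' b).trans_le h,
    fun b' hb' => (nadd_lt_nadd_left hb' a).trans_le h⟩, fun h => ?_⟩
  rw [nadd_def]
  exact max_le (Ordinal.iSup_le fun x => Order.succ_le_of_lt (h.1 x.1 x.2))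
    (Ordinal.iSup_le fun x => Order.succ_le_of_lt (h.2 x.1 x.2))

theorem lt_nadd_iff {a b c : Ordinal.{u}} :
    a < b ♯ c ↔ (∃ b' < b, a ≤ b' ♯ c) ∨ ∃ c' < c, a ≤ b ♯ c' := by
  constructor
  · intro h
    by_contra hn
    push_neg at hn
    exact absurd h (not_lt_of_ge (nadd_le_iff.2 hn))
  · rintro (⟨b', hb', h⟩ | ⟨c', hc', h⟩)
    · exact h.trans_lt (nadd_lt_nadd_right hb' c)
    · exact h.trans_lt (nadd_lt_nadd_left hc' b)

theorem nadd_le_nadd_left {b c : Ordinal.{u}} (h : b ≤ c) (a : Ordinal.{u}) :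
    a ♯ b ≤ a ♯ c := by
  rcases h.lt_or_eq with h | rfl
  · exact (nadd_lt_nadd_left h a).le
  · exact le_rfl

theorem nadd_le_nadd_right {b c : Ordinal.{u}} (h : b ≤ c) (a : Ordinal.{u}) :
    b ♯ a ≤ c ♯ a := by
  rcases h.lt_or_eq with h | rfl
  · exact (nadd_lt_nadd_right h a).le
  · exact le_rfl

@[simp] theorem nadd_zero (a : Ordinal.{u}) : a ♯ 0 = a := by
  induction a using Ordinal.induction with
  | h a IH =>
  refine le_antisymm (nadd_le_iff.2 ⟨fun a' ha' => by rw [IH a' ha']; exact ha',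
    fun b' hb' => absurd hb' (not_lt_of_ge zero_le)⟩) ?_
  refine le_of_forall_lt fun c hc => ?_
  rw [← IH c hc]
  exact nadd_lt_nadd_right hc 0

theorem add_le_nadd (a b : Ordinal.{u}) : a + b ≤ a ♯ b := by
  induction b using Ordinal.induction with
  | h b IH =>
  refine le_of_forall_lt fun c hc => ?_
  rcases lt_or_ge c a with h | h
  · calc c < a := h
      _ = a ♯ 0 := (nadd_zero a).symm
      _ ≤ a ♯ b := nadd_le_nadd_left zero_le a
  · have hd : a + (c - a) = c := Ordinal.add_sub_cancel_of_le h
    have hdb : c - a < b := by rw [← add_lt_add_iff_left a, hd]; exact hc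
    calc c = a + (c - a) := hd.symm
      _ ≤ a ♯ (c - a) := IH _ hdb
      _ < a ♯ b := nadd_lt_nadd_left hdb a

end Ordinal

open Order

/-- The rank of an element of the ranked sum of a constant family is the natural sum of the
component rank and the index rank. -/
theorem rankedRank_const {T Q : Type u} [PartialOrder T] [WellFoundedLT T]
    [PartialOrder Q] [WellFoundedLT Q] (a : Σ _ : T, Q) :
    rankedRank a = IsWellFounded.rank (α := Q) (· < ·) a.2
      ♯ IsWellFounded.rank (α := T) (· < ·) a.1 := by
  induction a using (rankedLT_wf (T := T) (P := fun _ => Q)).induction with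
  | _ b IH =>
  obtain ⟨t, x⟩ := b
  apply le_antisymm
  · unfold rankedRank
    rw [IsWellFounded.rank_eq]
    apply Ordinal.iSup_le
    rintro ⟨⟨s, y⟩, hlt⟩
    rw [Order.succ_le_iff]
    rcases hlt with ⟨he, hxy⟩ | ⟨hst, hpr⟩
    · dsimp at he
      subst he
      rw [show IsWellFounded.rank (RankedLT (T := T) (P := fun _ => Q)) ⟨s, y⟩
          = rankedRank (T := T) (P := fun _ => Q) ⟨s, y⟩ from rfl,
        IH ⟨s, y⟩ (Or.inl ⟨rfl, hxy⟩)]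
      exact nadd_lt_nadd_right (IsWellFounded.rank_lt_of_rel hxy) _
    · rw [show IsWellFounded.rank (RankedLT (T := T) (P := fun _ => Q)) ⟨s, y⟩
          = rankedRank (T := T) (P := fun _ => Q) ⟨s, y⟩ from rfl,
        IH ⟨s, y⟩ (Or.inr ⟨hst, hpr⟩)]
      have h1 : IsWellFounded.rank (α := Q) (· < ·) y
          ≤ IsWellFounded.rank (α := Q) (· < ·) x := hpr
      calc IsWellFounded.rank (α := Q) (· < ·) y ♯ IsWellFounded.rank (α := T) (· < ·) s
          ≤ IsWellFounded.rank (α := Q) (· < ·) x ♯ IsWellFounded.rank (α := T) (· < ·) s :=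
            nadd_le_nadd_right h1 _
        _ < IsWellFounded.rank (α := Q) (· < ·) x ♯ IsWellFounded.rank (α := T) (· < ·) t :=
            nadd_lt_nadd_left (IsWellFounded.rank_lt_of_rel hst) _
  · apply le_of_forall_lt
    intro c hc
    rcases lt_nadd_iff.1 hc with ⟨b', hb', hcb⟩ | ⟨c', hc', hcc⟩
    · rw [IsWellFounded.rank_eq, Ordinal.lt_iSup_iff] at hb'
      obtain ⟨⟨y, hy⟩, hb'⟩ := hb'
      rw [Order.lt_succ_iff] at hb'
      have hR : RankedLT (T := T) (P := fun _ => Q) ⟨t, y⟩ ⟨t, x⟩ := Or.inl ⟨rfl, hy⟩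
      calc c ≤ b' ♯ IsWellFounded.rank (α := T) (· < ·) t := hcb
        _ ≤ IsWellFounded.rank (α := Q) (· < ·) y ♯ IsWellFounded.rank (α := T) (· < ·) t :=
            nadd_le_nadd_right hb' _
        _ = rankedRank (T := T) (P := fun _ => Q) ⟨t, y⟩ := (IH _ hR).symm
        _ < rankedRank (T := T) (P := fun _ => Q) ⟨t, x⟩ := IsWellFounded.rank_lt_of_rel hR
    · rw [IsWellFounded.rank_eq, Ordinal.lt_iSup_iff] at hc'
      obtain ⟨⟨s, hs⟩, hc'⟩ := hc'
      rw [Order.lt_succ_iff] at hc'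
      have hR : RankedLT (T := T) (P := fun _ => Q) ⟨s, x⟩ ⟨t, x⟩ :=
        Or.inr ⟨hs, le_rfl⟩
      calc c ≤ IsWellFounded.rank (α := Q) (· < ·) x ♯ c' := hcc
        _ ≤ IsWellFounded.rank (α := Q) (· < ·) x ♯ IsWellFounded.rank (α := T) (· < ·) s :=
            nadd_le_nadd_left hc' _
        _ = rankedRank (T := T) (P := fun _ => Q) ⟨s, x⟩ := (IH _ hR).symm
        _ < rankedRank (T := T) (P := fun _ => Q) ⟨t, x⟩ := IsWellFounded.rank_lt_of_rel hR

/-- The inclusion of `Set.Iic γ` into the ordinals as an initial segment. -/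
noncomputable def iicInitialSeg (γ : Ordinal.{u}) :
    @InitialSeg (Set.Iic γ) Ordinal.{u} (· < ·) (· < ·) :=
  ⟨⟨⟨Subtype.val, Subtype.val_injective⟩, Iff.rfl⟩,
    fun a b hb => ⟨⟨b, le_of_lt (lt_of_lt_of_le hb a.2)⟩, rfl⟩⟩

theorem rank_Iic {γ : Ordinal.{u}} (x : Set.Iic γ) :
    IsWellFounded.rank (α := Set.Iic γ) (· < ·) x = Ordinal.lift.{u + 1} x.1 := by
  rw [IsWellFounded.rank_eq_typein, ← typein_ordinal x.1,
    ← typein_apply (iicInitialSeg γ) x]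
  rfl

instance instIsWellOrderToTypeLT (o : Ordinal.{u}) : IsWellOrder o.ToType (· < ·) :=
  isWellOrder_lt

theorem rank_toType {o : Ordinal.{u}} (c : Ordinal.{u}) (hc : c < o) :
    IsWellFounded.rank (α := o.ToType) (· < ·) (ToType.mk ⟨c, hc⟩) = c := by
  rw [IsWellFounded.rank_eq_typein]
  exact typein_enum _ _


/-! ### Natural addition facts -/

/-- Merging bound for natural addition, assuming closure at level `e`. -/
theorem nadd_merge_le {e : Ordinal.{u}}
    (hcl : ∀ a < ω ^ e, ∀ b < ω ^ e, a ♯ b < ω ^ e) :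
    ∀ n : ℕ, ∀ r, r < ω ^ e → ∀ s < ω ^ e, ∀ k l : ℕ, k + l ≤ n →
      (ω ^ e * k + r) ♯ (ω ^ e * l + s) ≤ ω ^ e * (↑(k + l) : Ordinal) + (r ♯ s) := by
  have hpow0 : (ω : Ordinal) ^ e ≠ 0 := opow_ne_zero e omega0_ne_zero
  intro n
  induction n using Nat.strong_induction_on with
  | _ n IHn =>
  intro r
  induction r using Ordinal.induction with
  | h r IHr =>
  intro hr s
  induction s using Ordinal.induction with
  | h s IHs =>
  intro hs k l hkl
  refine nadd_le_iff.2 ⟨?_, ?_⟩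
  · intro a' ha'
    rcases lt_or_ge a' (ω ^ e * k) with h | h
    · have hdiv : a' / ω ^ e < (k : Ordinal) := (Ordinal.div_lt hpow0).2 h
      obtain ⟨m, hm⟩ := lt_omega0.1 (hdiv.trans (nat_lt_omega0 k))
      have hmk : m < k := by exact_mod_cast hm ▸ hdiv
      have hr' : a' % ω ^ e < ω ^ e := mod_lt a' hpow0
      have hdecomp : ω ^ e * (m : Ordinal) + a' % ω ^ e = a' := by
        rw [← hm]; exact div_add_mod a' (ω ^ e)
      calc a' ♯ (ω ^ e * l + s) = (ω ^ e * (m : Ordinal) + a' % ω ^ e) ♯ (ω ^ e * l + s) := by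
            rw [hdecomp]
        _ ≤ ω ^ e * (↑(m + l) : Ordinal) + (a' % ω ^ e ♯ s) :=
            IHn (m + l) (by omega) _ hr' s hs m l le_rfl
        _ < ω ^ e * (↑(m + l) : Ordinal) + ω ^ e := add_lt_add_right (hcl _ hr' _ hs) _
        _ = ω ^ e * (↑(m + l + 1) : Ordinal) := by
            push_cast; rw [mul_add, mul_add, mul_one, mul_add]
        _ ≤ ω ^ e * (↑(k + l) : Ordinal) := by
            exact mul_le_mul_right (by exact_mod_cast by omega) _
        _ ≤ ω ^ e * (↑(k + l) : Ordinal) + (r ♯ s) := le_self_add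
    · have hd : ω ^ e * k + (a' - ω ^ e * k) = a' := Ordinal.add_sub_cancel_of_le h
      have hr'r : a' - ω ^ e * k < r := by
        rw [← add_lt_add_iff_left (ω ^ e * (k : Ordinal)), hd]; exact ha'
      calc a' ♯ (ω ^ e * l + s) = (ω ^ e * k + (a' - ω ^ e * k)) ♯ (ω ^ e * l + s) := by rw [hd]
        _ ≤ ω ^ e * (↑(k + l) : Ordinal) + ((a' - ω ^ e * k) ♯ s) :=
            IHr _ hr'r (hr'r.trans hr) s hs k l hkl
        _ < ω ^ e * (↑(k + l) : Ordinal) + (r ♯ s) :=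
            add_lt_add_right (nadd_lt_nadd_right hr'r s) _
  · intro b' hb'
    rcases lt_or_ge b' (ω ^ e * l) with h | h
    · have hdiv : b' / ω ^ e < (l : Ordinal) := (Ordinal.div_lt hpow0).2 h
      obtain ⟨m, hm⟩ := lt_omega0.1 (hdiv.trans (nat_lt_omega0 l))
      have hml : m < l := by exact_mod_cast hm ▸ hdiv
      have hs' : b' % ω ^ e < ω ^ e := mod_lt b' hpow0
      have hdecomp : ω ^ e * (m : Ordinal) + b' % ω ^ e = b' := by
        rw [← hm]; exact div_add_mod b' (ω ^ e)
      calc (ω ^ e * k + r) ♯ b' = (ω ^ e * k + r) ♯ (ω ^ e * (m : Ordinal) + b' % ω ^ e) := by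
            rw [hdecomp]
        _ ≤ ω ^ e * (↑(k + m) : Ordinal) + (r ♯ b' % ω ^ e) :=
            IHn (k + m) (by omega) _ hr _ hs' k m le_rfl
        _ < ω ^ e * (↑(k + m) : Ordinal) + ω ^ e := add_lt_add_right (hcl _ hr _ hs') _
        _ = ω ^ e * (↑(k + m + 1) : Ordinal) := by
            push_cast; rw [mul_add, mul_add, mul_one, mul_add]
        _ ≤ ω ^ e * (↑(k + l) : Ordinal) := by
            exact mul_le_mul_right (by exact_mod_cast by omega) _
        _ ≤ ω ^ e * (↑(k + l) : Ordinal) + (r ♯ s) := le_self_add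
    · have hd : ω ^ e * l + (b' - ω ^ e * l) = b' := Ordinal.add_sub_cancel_of_le h
      have hs'r : b' - ω ^ e * l < s := by
        rw [← add_lt_add_iff_left (ω ^ e * (l : Ordinal)), hd]; exact hb'
      calc (ω ^ e * k + r) ♯ b' = (ω ^ e * k + r) ♯ (ω ^ e * l + (b' - ω ^ e * l)) := by rw [hd]
        _ ≤ ω ^ e * (↑(k + l) : Ordinal) + (r ♯ (b' - ω ^ e * l)) :=
            IHs _ hs'r (hs'r.trans hs) k l hkl
        _ < ω ^ e * (↑(k + l) : Ordinal) + (r ♯ s) :=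
            add_lt_add_right (nadd_lt_nadd_left hs'r r) _

/-- `ω ^ e` is closed under natural addition. -/
theorem nadd_lt_omega0_opow (e : Ordinal.{u}) :
    ∀ a < ω ^ e, ∀ b < ω ^ e, a ♯ b < ω ^ e := by
  induction e using Ordinal.induction with
  | h e IH =>
  rcases Ordinal.zero_or_succ_or_isSuccLimit e with rfl | ⟨d, rfl⟩ | he
  · intro a ha b hb
    rw [opow_zero] at *
    rw [lt_one_iff_zero] at ha hb
    subst ha; subst hb; simp
  · intro a ha b hb
    have hpow0 : (ω : Ordinal) ^ d ≠ 0 := opow_ne_zero d omega0_ne_zero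
    rw [opow_succ] at ha hb ⊢
    obtain ⟨x, hx, hax⟩ := (lt_mul_iff_of_isSuccLimit isSuccLimit_omega0).1 ha
    obtain ⟨k, rfl⟩ := lt_omega0.1 hx
    obtain ⟨y, hy, hby⟩ := (lt_mul_iff_of_isSuccLimit isSuccLimit_omega0).1 hb
    obtain ⟨l, rfl⟩ := lt_omega0.1 hy
    have hka : a / ω ^ d < (k : Ordinal) := (Ordinal.div_lt hpow0).2 hax
    obtain ⟨ka, hkae⟩ := lt_omega0.1 (hka.trans (nat_lt_omega0 k))
    have hlb : b / ω ^ d < (l : Ordinal) := (Ordinal.div_lt hpow0).2 hby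
    obtain ⟨lb, hlbe⟩ := lt_omega0.1 (hlb.trans (nat_lt_omega0 l))
    have hda : ω ^ d * (ka : Ordinal) + a % ω ^ d = a := by rw [← hkae]; exact div_add_mod a _
    have hdb : ω ^ d * (lb : Ordinal) + b % ω ^ d = b := by rw [← hlbe]; exact div_add_mod b _
    have hcl := IH d (Order.lt_succ d)
    calc a ♯ b = (ω ^ d * (ka : Ordinal) + a % ω ^ d) ♯ (ω ^ d * (lb : Ordinal) + b % ω ^ d) := by
          rw [hda, hdb]
      _ ≤ ω ^ d * (↑(ka + lb) : Ordinal) + (a % ω ^ d ♯ b % ω ^ d) :=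
          nadd_merge_le hcl (ka + lb) _ (mod_lt a hpow0) _ (mod_lt b hpow0) ka lb le_rfl
      _ < ω ^ d * (↑(ka + lb) : Ordinal) + ω ^ d :=
          add_lt_add_right (hcl _ (mod_lt a hpow0) _ (mod_lt b hpow0)) _
      _ = ω ^ d * (↑(ka + lb + 1) : Ordinal) := by
          push_cast; rw [mul_add, mul_add, mul_one, mul_add]
      _ < ω ^ d * ω :=
          mul_lt_mul_of_pos_left (nat_lt_omega0 _) (opow_pos d omega0_pos)
  · intro a ha b hb
    obtain ⟨da, hda, hada⟩ := (lt_opow_of_isSuccLimit omega0_ne_zero he).1 ha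
    obtain ⟨db, hdb, hbdb⟩ := (lt_opow_of_isSuccLimit omega0_ne_zero he).1 hb
    have hd : max da db < e := max_lt hda hdb
    have h1 : a < ω ^ max da db :=
      hada.trans_le (opow_le_opow_right omega0_pos (le_max_left _ _))
    have h2 : b < ω ^ max da db :=
      hbdb.trans_le (opow_le_opow_right omega0_pos (le_max_right _ _))
    exact (IH _ hd a h1 b h2).trans_le (opow_le_opow_right omega0_pos hd.le)

theorem mul_omega0_eq_opow {α : Ordinal.{u}} (hα : α ≠ 0) :
    α * ω = ω ^ succ (log ω α) := by
  apply le_antisymm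
  · rw [mul_le_iff_of_isSuccLimit isSuccLimit_omega0]
    intro n hn
    obtain ⟨m, rfl⟩ := lt_omega0.1 hn
    have : ∀ m : ℕ, α * (m : Ordinal) < ω ^ succ (log ω α) := by
      intro m
      induction m with
      | zero => simp only [Nat.cast_zero, mul_zero]; exact opow_pos _ omega0_pos
      | succ m IH =>
          have : α * ((m : Ordinal) + 1) = α * m + α := by rw [mul_add, mul_one]
          rw [Nat.cast_add, Nat.cast_one, this]
          exact principal_add_omega0_opow _ IH (lt_opow_succ_log_self one_lt_omega0 α)
    exact (this m).le
  · rw [opow_succ]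
    exact mul_le_mul_left (opow_log_le_self ω hα) ω

theorem nadd_lt_mul_omega0 {α : Ordinal.{u}} :
    ∀ a < α * ω, ∀ b < α * ω, a ♯ b < α * ω := by
  rcases eq_or_ne α 0 with rfl | hα
  · intro a ha; rw [zero_mul] at ha; exact absurd ha (not_lt_of_ge zero_le)
  · rw [mul_omega0_eq_opow hα]
    exact nadd_lt_omega0_opow _

theorem nadd_eq_add_of_closure {β : Ordinal.{u}}
    (h : ∀ a < β, ∀ b < β, a ♯ b < β) : ∀ t < β, β ♯ t = β + t := by
  intro t
  induction t using Ordinal.induction with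
  | h t IHt =>
  intro ht
  refine le_antisymm (nadd_le_iff.2 ⟨?_, ?_⟩) (add_le_nadd β t)
  · intro b' hb'
    exact (h b' hb' t ht).trans_le (le_self_add)
  · intro t' ht'
    rw [IHt t' ht' (ht'.trans ht)]
    exact add_lt_add_right ht' β

theorem mul_omega0_nadd (α : Ordinal.{u}) : (α * ω) ♯ α = α * ω + α := by
  rcases eq_or_ne α 0 with rfl | hα
  · simp
  · have hpos : 0 < α := pos_iff_ne_zero.2 hα
    have hαlt : α < α * ω := by
      conv_lhs => rw [← mul_one α]
      exact mul_lt_mul_of_pos_left one_lt_omega0 hpos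
    exact nadd_eq_add_of_closure nadd_lt_mul_omega0 α hαlt


/-- The error in Lemma 12 of Malicki–Rutkowski can be arbitrarily large:
for each ordinal `α`, with `T = α + 1`, all components `β + 1` (`β` the least
ordinal with `α + β = β`), the maximum `a` of `P_α` has `rank_P a = β + α` while
`rank_T (f a) + rank_{P_{f a}} a = β`. -/
theorem overshoot_arbitrarily_large (α : Ordinal) :
    (∃ (T : Type) (_ : PartialOrder T) (_ : WellFoundedLT T)
        (P : T → Type) (_ : ∀ t, PartialOrder (P t)) (_ : ∀ t, WellFoundedLT (P t))
        (a : Σ t, P t),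
        rankedRank a = IsWellFounded.rank (α := T) (· < ·) a.1 + primRank a + α) ∧
    (∀ β : Ordinal, α + β = β → (∀ γ : Ordinal, α + γ = γ → β ≤ γ) →
      ∀ a : Σ _ : Set.Iic α, Set.Iic β,
        a = ⟨⟨α, Set.self_mem_Iic⟩, ⟨β, Set.self_mem_Iic⟩⟩ →
        rankedRank a = Ordinal.lift.{1} (β + α) ∧
        IsWellFounded.rank (α := Set.Iic α) (· < ·) a.1 + primRank a
          = Ordinal.lift.{1} β) := by
  constructor
  · have h1 : α < α + 1 := lt_add_of_pos_right α zero_lt_one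
    have h2 : α * ω < α * ω + 1 := lt_add_of_pos_right _ zero_lt_one
    refine ⟨(α + 1).ToType, inferInstance, inferInstance, fun _ => (α * ω + 1).ToType,
      fun _ => inferInstance, fun _ => inferInstance,
      ⟨ToType.mk (o := α + 1) ⟨α, h1⟩, ToType.mk (o := α * ω + 1) ⟨α * ω, h2⟩⟩, ?_⟩
    have hprim : primRank (T := (α + 1).ToType) (P := fun _ => (α * ω + 1).ToType)
        ⟨ToType.mk (o := α + 1) ⟨α, h1⟩, ToType.mk (o := α * ω + 1) ⟨α * ω, h2⟩⟩ = α * ω :=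
      rank_toType _ _
    rw [rankedRank_const, hprim]
    dsimp only
    rw [rank_toType, rank_toType, mul_omega0_nadd α,
      add_eq_right_iff_mul_omega0_le.2 le_rfl]
  · intro β hβ hmin a ha
    subst ha
    have hβω : β = α * ω :=
      le_antisymm (hmin _ (add_eq_right_iff_mul_omega0_le.2 le_rfl))
        (add_eq_right_iff_mul_omega0_le.1 hβ)
    have hprim : primRank (T := Set.Iic α) (P := fun _ => Set.Iic β)
        ⟨⟨α, Set.self_mem_Iic⟩, ⟨β, Set.self_mem_Iic⟩⟩ = Ordinal.lift.{1} β :=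
      rank_Iic _
    constructor
    · rw [rankedRank_const]
      dsimp only
      rw [rank_Iic, rank_Iic, hβω, lift_add, lift_mul, lift_omega0]
      exact mul_omega0_nadd _
    · rw [rank_Iic, hprim, ← lift_add, hβ]
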